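/- Let I ⊃ [0,∞) be an open interval and let f : I → (0,∞) be differentiable on I with f' integrable on (a,b), where 0 ≤ a < b < ∞. Suppose |f'| is α-logarithmically convex on [0, b] for some α ∈ (0,1], and set η = |f'(a)| / |f'(b)|. Then: if η = 1, |(f(a)+f(b))/2 − (1/(b−a))·∫_a^b f(x) dx| ≤ ((b−a)/3)·|f'(b)|; and if η < 1, |(f(a)+f(b))/2 − (1/(b−a))·∫_a^b f(x) dx| ≤ ((b−a)/2)·|f'(b)|·(4η^α − 4α·ln η − 2α²·(ln η)² − 4)/(2α³·(ln η)³). -/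

import Mathlib

set_option maxHeartbeats 16000000


open MeasureTheory Real Set intervalIntegral

lemma myexp1 {t : ℝ} (ht : 0 ≤ t) : 2*t ≤ Real.exp t - Real.exp (-t) := by
  have h1 : 1 + t + t^2/2 ≤ Real.exp t := Real.quadratic_le_exp_of_nonneg ht
  have h2 : Real.exp t * Real.exp (-t) = 1 := by rw [← Real.exp_add]; simp
  have h3 : 0 < Real.exp t := Real.exp_pos t
  nlinarith [sq_nonneg (Real.exp t - (1+t+t^2/2)), sq_nonneg t]

lemma myphi {u : ℝ} (hu : u ≤ 0) : Real.exp u ≤ 1 + u * Real.exp (u/2) := by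
  have h : 2*(-(u/2)) ≤ Real.exp (-(u/2)) - Real.exp (u/2) := by
    simpa using myexp1 (t := -(u/2)) (by linarith)
  have h2 : Real.exp (u/2) * Real.exp (-(u/2)) = 1 := by rw [← Real.exp_add]; simp
  have h3 : Real.exp u = Real.exp (u/2) * Real.exp (u/2) := by rw [← Real.exp_add]; ring_nf
  have h4 : (0:ℝ) < Real.exp (u/2) := Real.exp_pos _
  nlinarith [mul_le_mul_of_nonneg_right h h4.le]

lemma myquad {u : ℝ} (hu : u ≤ 0) : Real.exp u ≤ 1 + u + u^2/2 := by
  have h1 : 1 + (-u) + (-u)^2/2 ≤ Real.exp (-u) := Real.quadratic_le_exp_of_nonneg (by linarith)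
  have h2 : Real.exp u * Real.exp (-u) = 1 := by rw [← Real.exp_add]; simp
  have h3 : 0 < Real.exp u := Real.exp_pos _
  nlinarith [mul_le_mul_of_nonneg_left h1 h3.le, sq_nonneg (u^2), sq_nonneg u]

lemma absint (a b m : ℝ) (hab : a < b) (hm : m = (a+b)/2) :
    ∫ x in a..b, |x - m| = (b-a)^2/4 := by
  have h1 : IntervalIntegrable (fun x => |x - m|) volume a m :=
    (Continuous.intervalIntegrable (by continuity) a m)
  have h2 : IntervalIntegrable (fun x => |x - m|) volume m b :=
    (Continuous.intervalIntegrable (by continuity) m b)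
  rw [← integral_add_adjacent_intervals h1 h2]
  have e1 : ∫ x in a..m, |x - m| = ∫ x in a..m, (m - x) := by
    apply integral_congr
    intro x hx
    rw [Set.uIcc_of_le (by linarith)] at hx
    show |x - m| = m - x
    rw [abs_of_nonpos (by linarith [hx.2])]; ring
  have e2 : ∫ x in m..b, |x - m| = ∫ x in m..b, (x - m) := by
    apply integral_congr
    intro x hx
    rw [Set.uIcc_of_le (by linarith)] at hx
    show |x - m| = x - m
    rw [abs_of_nonneg (by linarith [hx.1])]
  rw [e1, e2]
  have i1 : ∫ x in a..m, (m - x) = m*(m-a) - (m^2 - a^2)/2 := by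
    rw [integral_sub intervalIntegrable_const
      (Continuous.intervalIntegrable (by continuity) a m)]
    simp [integral_id]
    ring
  have i2 : ∫ x in m..b, (x - m) = (b^2 - m^2)/2 - m*(b-m) := by
    rw [integral_sub
      (Continuous.intervalIntegrable (by continuity) m b) intervalIntegrable_const]
    simp [integral_id]
    ring
  rw [i1, i2, hm]; ring

lemma Qval (m b c k : ℝ) (hk : k ≠ 0) :
    ∫ x in m..b, (x - m) * (c * Real.exp (k*x))
      = c*Real.exp (k*b)*((b-m)/k - 1/k^2) + c*Real.exp (k*m)*(1/k^2) := by
  have hF : ∀ x : ℝ, HasDerivAt (fun y => c * Real.exp (k*y) * ((y-m)/k - 1/k^2))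
      ((x - m) * (c * Real.exp (k*x))) x := by
    intro x
    have h1 : HasDerivAt (fun y : ℝ => k*y) k x := by
      simpa using (hasDerivAt_id x).const_mul k
    have h2 : HasDerivAt (fun y : ℝ => Real.exp (k*y)) (Real.exp (k*x) * k) x := h1.exp
    have h3 : HasDerivAt (fun y : ℝ => (y-m)/k - 1/k^2) (1/k) x :=
      (((hasDerivAt_id x).sub_const m).div_const k).sub_const (1/k^2)
    have h4 : HasDerivAt (fun y => c * Real.exp (k*y) * ((y-m)/k - 1/k^2))
        (c * (Real.exp (k*x) * k) * ((x-m)/k - 1/k^2) + c * Real.exp (k*x) * (1/k)) x :=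
      (h2.const_mul c).mul h3
    convert h4 using 1
    field_simp
    ring
  rw [integral_eq_sub_of_hasDerivAt (fun x _ => hF x)
    ((Continuous.intervalIntegrable (by continuity) m b))]
  simp

lemma Qrefl (a b c k : ℝ) (hab : a < b) (hc : 0 ≤ c) (hk : 0 ≤ k) :
    ∫ x in a..((a+b)/2), (((a+b)/2) - x) * (c * Real.exp (k*x))
      ≤ ∫ x in ((a+b)/2)..b, (x - ((a+b)/2)) * (c * Real.exp (k*x)) := by
  set m : ℝ := (a+b)/2 with hm
  have hmb : m ≤ b := by rw [hm]; linarith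
  have key := intervalIntegral.integral_comp_sub_left
    (a := m) (b := b) (fun y => (m - y) * (c * Real.exp (k*y))) (a+b)
  have e1 : a+b-b = a := by ring
  have e2 : a+b-m = m := by rw [hm]; ring
  rw [e1, e2] at key
  rw [← key]
  apply integral_mono_on hmb
    (Continuous.intervalIntegrable (by continuity) m b)
    (Continuous.intervalIntegrable (by continuity) m b)
  intro x hx
  show (m - (a+b-x)) * (c * Real.exp (k*(a+b-x))) ≤ (x - m) * (c * Real.exp (k*x))
  have h1 : m - (a+b-x) = x - m := by rw [hm]; ring
  rw [h1]
  have hxm : m ≤ x := hx.1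
  have hxx : k*(a+b-x) ≤ k*x := by
    apply mul_le_mul_of_nonneg_left _ hk
    rw [hm] at hxm; linarith
  have hee := Real.exp_le_exp.2 hxx
  have h0 : 0 ≤ x - m := by linarith
  have h2 : c * Real.exp (k*(a+b-x)) ≤ c * Real.exp (k*x) :=
    mul_le_mul_of_nonneg_left hee hc
  exact mul_le_mul_of_nonneg_left h2 h0

lemma final_ineq (h F u V E : ℝ) (hh : 0 < h) (hF : 0 ≤ F) (hu : u < 0) (hE : E ≤ 1 + u*V) :
    F*((h/2)/(-u/h) - 1/(-u/h)^2) + F*V*(1/(-u/h)^2)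
      ≤ (h/2 * F * ((4*E - 4*u - 2*u^2 - 4)/(2*u^3))) * h := by
  have hu' : u ≠ 0 := ne_of_lt hu
  have hh' : h ≠ 0 := ne_of_gt hh
  have hu3 : u^3 < 0 := by nlinarith [mul_pos_of_neg_of_neg hu hu]
  have hdiff : (h/2 * F * ((4*E - 4*u - 2*u^2 - 4)/(2*u^3))) * h
      - (F*((h/2)/(-u/h) - 1/(-u/h)^2) + F*V*(1/(-u/h)^2))
      = F * h^2 * ((E - u*V - 1)/u^3) := by
    field_simp
    ring
  nlinarith [mul_nonneg (mul_nonneg hF (sq_nonneg h))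
    (div_nonneg_of_nonpos (by linarith : E - u*V - 1 ≤ 0) hu3.le)]

theorem stmt3
    (I : Set ℝ) (hIopen : IsOpen I) (hIconn : Set.OrdConnected I)
    (hIci : Set.Ici (0:ℝ) ⊆ I)
    (f f' : ℝ → ℝ)
    (hfpos : ∀ x ∈ I, 0 < f x)
    (hderiv : ∀ x ∈ I, HasDerivAt f (f' x) x)
    (a b : ℝ) (ha : 0 ≤ a) (hab : a < b)
    (hint : IntervalIntegrable f' MeasureTheory.volume a b)
    (α : ℝ) (hα : α ∈ Set.Ioc (0:ℝ) 1)
    (hconv : ∀ x ∈ Set.Icc (0:ℝ) (b), ∀ y ∈ Set.Icc (0:ℝ) (b), ∀ t ∈ Set.Icc (0:ℝ) 1,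
      |f' (t * x + (1 - t) * y)| ≤ |f' (x)| ^ (t ^ α) * |f' (y)| ^ (1 - t ^ α))
    (η : ℝ) (hη : η = |f' a| / |f' b|) :
    (η = 1 → |(f a + f b) / 2 - (1 / (b - a)) * ∫ x in a..b, f x| ≤ (b - a) / 3 * |f' b|) ∧
    (η < 1 → |(f a + f b) / 2 - (1 / (b - a)) * ∫ x in a..b, f x| ≤ (b - a) / 2 * |f' b| *
      ((4 * η ^ α - 4 * α * Real.log η - 2 * α ^ 2 * Real.log η ^ 2 - 4) /
        (2 * α ^ 3 * Real.log η ^ 3))) := by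
  have hba : (0:ℝ) < b - a := by linarith
  have hba' : b - a ≠ 0 := ne_of_gt hba
  have hIcc : Set.Icc a b ⊆ I := fun x hx => hIci (le_trans ha hx.1)
  have huIcc : Set.uIcc a b = Set.Icc a b := Set.uIcc_of_le hab.le
  have haI : a ∈ Set.Icc (0:ℝ) b := ⟨ha, hab.le⟩
  have hbI : b ∈ Set.Icc (0:ℝ) b := ⟨le_trans ha hab.le, le_rfl⟩
  -- Integration by parts identity
  have hparts := intervalIntegral.integral_mul_deriv_eq_deriv_mul
    (u := fun x => x - (a+b)/2) (v := f) (u' := fun _ => (1:ℝ)) (v' := f')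
    (fun x hx => (hasDerivAt_id x).sub_const _)
    (fun x hx => hderiv x (hIcc (huIcc ▸ hx)))
    intervalIntegrable_const hint
  simp only [one_mul] at hparts
  have hS : (f a + f b) / 2 - (1 / (b - a)) * ∫ x in a..b, f x
      = (∫ x in a..b, (x - (a+b)/2) * f' x) / (b-a) := by
    rw [hparts]; field_simp; ring
  -- pointwise bound
  have hpt : f' b ≠ 0 → ∀ x ∈ Set.Icc a b,
      |f' x| ≤ η ^ (((b-x)/(b-a))^α) * |f' b| := by
    intro hb0 x hx
    have hb0' : 0 < |f' b| := abs_pos.2 hb0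
    have ht0 : 0 ≤ (b-x)/(b-a) := div_nonneg (by linarith [hx.2]) hba.le
    have ht1 : (b-x)/(b-a) ≤ 1 := by
      rw [div_le_one hba]; linarith [hx.1]
    have hxe : ((b-x)/(b-a)) * a + (1 - (b-x)/(b-a)) * b = x := by
      field_simp; ring
    have hcv := hconv a haI b hbI ((b-x)/(b-a)) ⟨ht0, ht1⟩
    rw [hxe] at hcv
    have hfa : |f' a| = η * |f' b| := by
      rw [hη]; field_simp
    calc |f' x| ≤ |f' a| ^ (((b-x)/(b-a))^α) * |f' b| ^ (1 - ((b-x)/(b-a))^α) := hcv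
      _ = η ^ (((b-x)/(b-a))^α) * |f' b| := by
          rw [hfa, Real.mul_rpow (by rw [hη]; positivity) (abs_nonneg _), mul_assoc,
            ← Real.rpow_add hb0']
          simp
  -- constancy helper
  have hconstLHS : (∀ x ∈ Set.Ioo a b, f' x = 0) →
      (f a + f b)/2 - (1/(b-a)) * ∫ x in a..b, f x = 0 := by
    intro hz
    have hfy : ∀ y ∈ Set.Icc a b, f y = f a := by
      intro y hy
      have hay : a ≤ y := hy.1
      have hFTC : ∫ x in a..y, f' x = f y - f a := by
        apply intervalIntegral.integral_eq_sub_of_hasDerivAt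
        · intro x hx
          rw [Set.uIcc_of_le hay] at hx
          exact hderiv x (hIcc ⟨hx.1, le_trans hx.2 hy.2⟩)
        · exact hint.mono_set (by
            rw [Set.uIcc_of_le hay, huIcc]
            exact Set.Icc_subset_Icc le_rfl hy.2)
      have hzero : ∫ x in a..y, f' x = ∫ x in a..y, (0:ℝ) := by
        apply intervalIntegral.integral_congr_ae
        rw [MeasureTheory.ae_iff]
        apply measure_mono_null (t := {y})
        · intro x hxx
          simp only [Set.mem_setOf_eq, Classical.not_imp] at hxx
          obtain ⟨hx1, hx2⟩ := hxx
          rw [Set.uIoc_of_le hay] at hx1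
          by_contra hxy
          have hxy' : x ≠ y := hxy
          have hxb : x < b := lt_of_lt_of_le (lt_of_le_of_ne hx1.2 hxy') hy.2
          · exact hx2 (hz x ⟨hx1.1, hxb⟩)
        · exact Real.volume_singleton
      rw [hzero] at hFTC
      simp at hFTC
      linarith
    have hfb2 : f b = f a := hfy b ⟨hab.le, le_rfl⟩
    have hI2 : ∫ x in a..b, f x = (b-a) * f a := by
      rw [intervalIntegral.integral_congr (g := fun _ => f a)
        (fun x hx => hfy x (huIcc ▸ hx))]
      simp [smul_eq_mul]
    rw [hfb2, hI2]
    field_simp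
    ring
  constructor
  · -- case η = 1
    intro hη1
    have hb0 : f' b ≠ 0 := by
      intro h
      rw [h] at hη
      simp at hη
      rw [hη] at hη1
      norm_num at hη1
    have hptb : ∀ x ∈ Set.Icc a b, |f' x| ≤ |f' b| := by
      intro x hx
      have := hpt hb0 x hx
      rwa [hη1, Real.one_rpow, one_mul] at this
    have habsS : |∫ x in a..b, (x - (a+b)/2) * f' x| ≤ (b-a)^2/4 * |f' b| := by
      have h1 : |∫ x in a..b, (x - (a+b)/2) * f' x|
          ≤ ∫ x in a..b, |( x - (a+b)/2) * f' x| :=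
        intervalIntegral.abs_integral_le_integral_abs hab.le
      have hw : IntervalIntegrable (fun x => (x - (a+b)/2) * f' x) volume a b :=
        hint.continuousOn_mul (by fun_prop)
      have h2 : ∫ x in a..b, |(x - (a+b)/2) * f' x|
          ≤ ∫ x in a..b, |x - (a+b)/2| * |f' b| := by
        apply integral_mono_on hab.le hw.abs
          (Continuous.intervalIntegrable (by continuity) a b)
        intro x hx
        rw [abs_mul]
        exact mul_le_mul_of_nonneg_left (hptb x hx) (abs_nonneg _)
      have h3 : ∫ x in a..b, |x - (a+b)/2| * |f' b|
          = (b-a)^2/4 * |f' b| := by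
        rw [intervalIntegral.integral_mul_const, absint a b _ hab rfl]
      linarith
    rw [hS, abs_div, abs_of_pos hba, div_le_iff₀ hba]
    calc |∫ x in a..b, (x - (a+b)/2) * f' x| ≤ (b-a)^2/4 * |f' b| := habsS
      _ ≤ (b - a) / 3 * |f' b| * (b - a) := by nlinarith [abs_nonneg (f' b), sq_nonneg (b-a)]
  · -- case η < 1
    intro hη1
    by_cases hfb0 : f' b = 0
    · -- degenerate : f' b = 0
      have hz : ∀ x ∈ Set.Ioo a b, f' x = 0 := by
        intro x hx
        have ht0 : 0 < (b-x)/(b-a) := div_pos (by linarith [hx.2]) hba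
        have ht1 : (b-x)/(b-a) < 1 := by
          rw [div_lt_one hba]; linarith [hx.1]
        have hxe : ((b-x)/(b-a)) * a + (1 - (b-x)/(b-a)) * b = x := by
          field_simp; ring
        have hcv := hconv a haI b hbI ((b-x)/(b-a)) ⟨ht0.le, ht1.le⟩
        rw [hxe] at hcv
        have hta : ((b-x)/(b-a))^α < 1 := Real.rpow_lt_one ht0.le ht1 hα.1
        have : |f' b| ^ (1 - ((b-x)/(b-a))^α) = 0 := by
          rw [hfb0, abs_zero]
          exact Real.zero_rpow (by linarith)
        rw [this, mul_zero] at hcv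
        exact abs_nonpos_iff.1 hcv
      rw [hconstLHS hz, abs_zero, hfb0, abs_zero]
      rw [mul_zero, zero_mul]
    · by_cases hfa0 : f' a = 0
      · -- degenerate : f' a = 0, η = 0
        have hz : ∀ x ∈ Set.Ioo a b, f' x = 0 := by
          intro x hx
          have ht0 : 0 < (b-x)/(b-a) := div_pos (by linarith [hx.2]) hba
          have ht1 : (b-x)/(b-a) < 1 := by
            rw [div_lt_one hba]; linarith [hx.1]
          have hxe : ((b-x)/(b-a)) * a + (1 - (b-x)/(b-a)) * b = x := by
            field_simp; ring
          have hcv := hconv a haI b hbI ((b-x)/(b-a)) ⟨ht0.le, ht1.le⟩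
          rw [hxe] at hcv
          have : |f' a| ^ (((b-x)/(b-a))^α) = 0 := by
            rw [hfa0, abs_zero]
            exact Real.zero_rpow (ne_of_gt (Real.rpow_pos_of_pos ht0 α))
          rw [this, zero_mul] at hcv
          exact abs_nonpos_iff.1 hcv
        have hη0 : η = 0 := by rw [hη, hfa0, abs_zero, zero_div]
        rw [hconstLHS hz, abs_zero, hη0]
        rw [Real.log_zero, Real.zero_rpow (ne_of_gt hα.1)]
        norm_num
      · -- main case : 0 < η < 1
        have hfa' : 0 < |f' a| := abs_pos.2 hfa0
        have hfb' : 0 < |f' b| := abs_pos.2 hfb0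
        have hη0 : 0 < η := by rw [hη]; positivity
        have hL : Real.log η < 0 := Real.log_neg hη0 hη1
        have hu : α * Real.log η < 0 := mul_neg_of_pos_of_neg hα.1 hL
        have hu3 : (α * Real.log η)^3 < 0 := by
          have h2 : 0 < (α * Real.log η) * (α * Real.log η) := mul_pos_of_neg_of_neg hu hu
          nlinarith [mul_neg_of_pos_of_neg h2 hu]
        have hE : Real.exp (α * Real.log η) ≤ 1 + (α * Real.log η) + (α * Real.log η)^2/2 :=
          myquad hu.le
        -- rewrite RHS
        have hTrw : (b - a) / 2 * |f' b| *
            ((4 * η ^ α - 4 * α * Real.log η - 2 * α ^ 2 * Real.log η ^ 2 - 4) /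
              (2 * α ^ 3 * Real.log η ^ 3))
            = (b-a)/2 * |f' b| *
              ((4 * Real.exp (α * Real.log η) - 4 * (α * Real.log η)
                - 2 * (α * Real.log η)^2 - 4) / (2 * (α * Real.log η)^3)) := by
          rw [Real.rpow_def_of_pos hη0, mul_comm (Real.log η) α]
          ring_nf
        by_cases hex : ∃ x₀ ∈ Set.Icc a b, f' x₀ = 0
        · -- interior zero: LHS = 0, RHS ≥ 0
          obtain ⟨x₀, hx₀, hfx₀⟩ := hex
          have hx₀a : x₀ ≠ a := by intro h; rw [h] at hfx₀; exact hfa0 hfx₀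
          have hx₀b : x₀ ≠ b := by intro h; rw [h] at hfx₀; exact hfb0 hfx₀
          have hx₀I : x₀ ∈ Set.Ioo a b :=
            ⟨lt_of_le_of_ne hx₀.1 (Ne.symm hx₀a), lt_of_le_of_ne hx₀.2 hx₀b⟩
          have hx₀Icc : x₀ ∈ Set.Icc (0:ℝ) b := ⟨le_trans ha hx₀.1, hx₀.2⟩
          have hz : ∀ x ∈ Set.Ioo a b, f' x = 0 := by
            intro z hz'
            rcases lt_trichotomy z x₀ with h | h | h
            · have ht0 : 0 < (z-a)/(x₀-a) := div_pos (by linarith [hz'.1]) (by linarith [hx₀I.1])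
              have ht1 : (z-a)/(x₀-a) ≤ 1 := by
                rw [div_le_one (by linarith [hx₀I.1])]; linarith
              have hxe : ((z-a)/(x₀-a)) * x₀ + (1 - (z-a)/(x₀-a)) * a = z := by
                have h5 : (z-a)/(x₀-a) * (x₀ - a) = z - a :=
                  div_mul_cancel₀ _ (by linarith [hx₀I.1, hz'.1] : x₀ - a ≠ 0)
                linear_combination h5
              have hcv := hconv x₀ hx₀Icc a haI ((z-a)/(x₀-a)) ⟨ht0.le, ht1⟩
              rw [hxe] at hcv
              have : |f' x₀| ^ (((z-a)/(x₀-a))^α) = 0 := by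
                rw [hfx₀, abs_zero]
                exact Real.zero_rpow (ne_of_gt (Real.rpow_pos_of_pos ht0 α))
              rw [this, zero_mul] at hcv
              exact abs_nonpos_iff.1 hcv
            · rw [h]; exact hfx₀
            · have ht0 : 0 < (b-z)/(b-x₀) := div_pos (by linarith [hz'.2]) (by linarith [hx₀I.2])
              have ht1 : (b-z)/(b-x₀) ≤ 1 := by
                rw [div_le_one (by linarith [hx₀I.2])]; linarith
              have hxe : ((b-z)/(b-x₀)) * x₀ + (1 - (b-z)/(b-x₀)) * b = z := by
                have h5 : (b-z)/(b-x₀) * (b - x₀) = b - z :=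
                  div_mul_cancel₀ _ (by linarith [hx₀I.2, hz'.2] : b - x₀ ≠ 0)
                linear_combination -h5
              have hcv := hconv x₀ hx₀Icc b hbI ((b-z)/(b-x₀)) ⟨ht0.le, ht1⟩
              rw [hxe] at hcv
              have : |f' x₀| ^ (((b-z)/(b-x₀))^α) = 0 := by
                rw [hfx₀, abs_zero]
                exact Real.zero_rpow (ne_of_gt (Real.rpow_pos_of_pos ht0 α))
              rw [this, zero_mul] at hcv
              exact abs_nonpos_iff.1 hcv
          rw [hconstLHS hz, abs_zero, hTrw]
          have hnum : 4 * Real.exp (α * Real.log η) - 4 * (α * Real.log η)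
              - 2 * (α * Real.log η)^2 - 4 ≤ 0 := by nlinarith
          have hden : 2 * (α * Real.log η)^3 ≤ 0 := by nlinarith
          have := div_nonneg_of_nonpos hnum hden
          positivity
        · -- nonvanishing derivative: Darboux sign
          push_neg at hex
          obtain ⟨u, hudef⟩ : ∃ u : ℝ, u = α * Real.log η := ⟨_, rfl⟩
          obtain ⟨m, hm⟩ : ∃ m : ℝ, m = (a+b)/2 := ⟨_, rfl⟩
          obtain ⟨k, hkdef⟩ : ∃ k : ℝ, k = -u/(b-a) := ⟨_, rfl⟩
          obtain ⟨c, hcdef⟩ : ∃ c : ℝ, c = |f' b| * Real.exp (u*b/(b-a)) := ⟨_, rfl⟩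
          rw [← hudef] at hu hu3 hE hTrw
          rw [← hm] at hS
          have ham : a ≤ m := by rw [hm]; linarith
          have hmb : m ≤ b := by rw [hm]; linarith
          have hk0 : 0 < k := by rw [hkdef]; exact div_pos (by linarith) hba
          have hc0 : 0 ≤ c := by rw [hcdef]; positivity
          -- pointwise bound by exponential
          have hP : ∀ x ∈ Set.Icc a b, |f' x| ≤ c * Real.exp (k*x) := by
            intro x hx
            have h1 := hpt hfb0 x hx
            have ht0 : 0 ≤ (b-x)/(b-a) := div_nonneg (by linarith [hx.2]) hba.le
            have ht1 : (b-x)/(b-a) ≤ 1 := by rw [div_le_one hba]; linarith [hx.1]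
            have h2 : α*((b-x)/(b-a)) ≤ ((b-x)/(b-a))^α := by
              rcases eq_or_lt_of_le ht0 with h | h
              · rw [← h, Real.zero_rpow (ne_of_gt hα.1)]
                simp
              · have h3 : ((b-x)/(b-a))^(1:ℝ) ≤ ((b-x)/(b-a))^α :=
                  Real.rpow_le_rpow_of_exponent_ge h ht1 hα.2
                rw [Real.rpow_one] at h3
                nlinarith [hα.1.le, hα.2]
            have h4 : η ^ (((b-x)/(b-a))^α) ≤ η ^ (α*((b-x)/(b-a))) :=
              Real.rpow_le_rpow_of_exponent_ge hη0 hη1.le h2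
            have h5 : η ^ (α*((b-x)/(b-a))) = Real.exp (u * ((b-x)/(b-a))) := by
              rw [Real.rpow_def_of_pos hη0, hudef]
              ring_nf
            have h6 : c * Real.exp (k*x) = Real.exp (u * ((b-x)/(b-a))) * |f' b| := by
              rw [hcdef, mul_assoc, ← Real.exp_add, mul_comm]
              congr 2
              rw [hkdef]
              field_simp
              ring
            rw [h6]
            calc |f' x| ≤ η ^ (((b-x)/(b-a))^α) * |f' b| := h1
              _ ≤ Real.exp (u * ((b-x)/(b-a))) * |f' b| := by
                  rw [← h5]
                  exact mul_le_mul_of_nonneg_right h4 (abs_nonneg _)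
          -- integrability
          have hsub1 : Set.uIcc a m ⊆ Set.uIcc a b := by
            rw [Set.uIcc_of_le ham, huIcc]; exact Set.Icc_subset_Icc le_rfl hmb
          have hsub2 : Set.uIcc m b ⊆ Set.uIcc a b := by
            rw [Set.uIcc_of_le hmb, huIcc]; exact Set.Icc_subset_Icc ham le_rfl
          have hw1 : IntervalIntegrable (fun x => (x-m)*f' x) volume a m :=
            (hint.mono_set hsub1).continuousOn_mul (by fun_prop)
          have hw2 : IntervalIntegrable (fun x => (x-m)*f' x) volume m b :=
            (hint.mono_set hsub2).continuousOn_mul (by fun_prop)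
          have hsplit := integral_add_adjacent_intervals hw1 hw2
          have hQ1i : IntervalIntegrable (fun x => (x-m)*(c*Real.exp (k*x))) volume m b :=
            Continuous.intervalIntegrable (by continuity) m b
          have hQ2i : IntervalIntegrable (fun x => (m-x)*(c*Real.exp (k*x))) volume a m :=
            Continuous.intervalIntegrable (by continuity) a m
          have hQ21 : (∫ x in a..m, (m-x)*(c*Real.exp (k*x)))
              ≤ ∫ x in m..b, (x-m)*(c*Real.exp (k*x)) := by
            have := Qrefl a b c k hab hc0 hk0.le
            rwa [← hm] at this
          -- sign dichotomy
          have hsign := hasDerivWithinAt_forall_lt_or_forall_gt_of_forall_ne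
            (convex_Icc a b)
            (fun x hx => (hderiv x (hIcc hx)).hasDerivWithinAt) (m := 0) hex
          have habs : |∫ x in a..b, (x-m)*f' x|
              ≤ ∫ x in m..b, (x-m)*(c*Real.exp (k*x)) := by
            rcases hsign with hneg | hpos
            · -- f' < 0 on Icc a b
              have hB1 : -(∫ x in m..b, (x-m)*(c*Real.exp (k*x)))
                  ≤ ∫ x in m..b, (x-m)*f' x := by
                have hpw : ∀ x ∈ Set.Icc m b,
                    (fun x => -((x-m)*(c*Real.exp (k*x)))) x ≤ (fun x => (x-m)*f' x) x := by
                  intro x hx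
                  have hax : x ∈ Set.Icc a b := ⟨le_trans ham hx.1, hx.2⟩
                  have h7 : -(c*Real.exp (k*x)) ≤ f' x := by
                    have := hP x hax
                    have := neg_abs_le (f' x)
                    linarith
                  have h8 : (x-m)*(-(c*Real.exp (k*x))) ≤ (x-m)*f' x :=
                    mul_le_mul_of_nonneg_left h7 (by linarith [hx.1])
                  show -((x-m)*(c*Real.exp (k*x))) ≤ (x-m)*f' x
                  nlinarith [h8]
                have h := intervalIntegral.integral_mono_on (μ := volume) hmb hQ1i.neg hw2 hpw
                simp only [Pi.neg_apply] at h
                rwa [intervalIntegral.integral_neg] at h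
              have hB2 : ∫ x in m..b, (x-m)*f' x ≤ 0 := by
                have hpw : ∀ x ∈ Set.Icc m b,
                    (fun x => (x-m)*f' x) x ≤ (fun _ => (0:ℝ)) x := by
                  intro x hx
                  have hax : x ∈ Set.Icc a b := ⟨le_trans ham hx.1, hx.2⟩
                  show (x-m)*f' x ≤ 0
                  nlinarith [mul_nonneg (by linarith [hx.1] : (0:ℝ) ≤ x - m)
                    (by linarith [hneg x hax] : (0:ℝ) ≤ -f' x)]
                have h := intervalIntegral.integral_mono_on (μ := volume) hmb hw2
                  intervalIntegrable_const hpw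
                simpa using h
              have hB3 : 0 ≤ ∫ x in a..m, (x-m)*f' x := by
                apply intervalIntegral.integral_nonneg ham
                intro x hx
                have hax : x ∈ Set.Icc a b := ⟨hx.1, le_trans hx.2 hmb⟩
                nlinarith [mul_nonneg (by linarith [hx.2] : (0:ℝ) ≤ m - x)
                  (by linarith [hneg x hax] : (0:ℝ) ≤ -f' x)]
              have hB4 : ∫ x in a..m, (x-m)*f' x
                  ≤ ∫ x in a..m, (m-x)*(c*Real.exp (k*x)) := by
                apply intervalIntegral.integral_mono_on (μ := volume) ham hw1 hQ2i
                intro x hx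
                have hax : x ∈ Set.Icc a b := ⟨hx.1, le_trans hx.2 hmb⟩
                have h7 : -(c*Real.exp (k*x)) ≤ f' x := by
                  have := hP x hax
                  have := neg_abs_le (f' x)
                  linarith
                have h8 : (x-m)*f' x ≤ (x-m)*(-(c*Real.exp (k*x))) :=
                  mul_le_mul_of_nonpos_left h7 (by linarith [hx.2])
                nlinarith [h8]
              rw [← hsplit, abs_le]
              constructor
              · linarith
              · linarith
            · -- f' > 0 on Icc a b
              have hB1 : ∫ x in m..b, (x-m)*f' x
                  ≤ ∫ x in m..b, (x-m)*(c*Real.exp (k*x)) := by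
                apply intervalIntegral.integral_mono_on (μ := volume) hmb hw2 hQ1i
                intro x hx
                have hax : x ∈ Set.Icc a b := ⟨le_trans ham hx.1, hx.2⟩
                exact mul_le_mul_of_nonneg_left
                  (le_trans (le_abs_self _) (hP x hax)) (by linarith [hx.1])
              have hB2 : 0 ≤ ∫ x in m..b, (x-m)*f' x := by
                apply intervalIntegral.integral_nonneg hmb
                intro x hx
                have hax : x ∈ Set.Icc a b := ⟨le_trans ham hx.1, hx.2⟩
                exact mul_nonneg (by linarith [hx.1]) (hpos x hax).le
              have hB3 : ∫ x in a..m, (x-m)*f' x ≤ 0 := by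
                have hpw : ∀ x ∈ Set.Icc a m,
                    (fun x => (x-m)*f' x) x ≤ (fun _ => (0:ℝ)) x := by
                  intro x hx
                  have hax : x ∈ Set.Icc a b := ⟨hx.1, le_trans hx.2 hmb⟩
                  show (x-m)*f' x ≤ 0
                  nlinarith [mul_nonneg (by linarith [hx.2] : (0:ℝ) ≤ m - x)
                    (hpos x hax).le]
                have h := intervalIntegral.integral_mono_on (μ := volume) ham hw1
                  intervalIntegrable_const hpw
                simpa using h
              have hB4 : -(∫ x in a..m, (m-x)*(c*Real.exp (k*x)))
                  ≤ ∫ x in a..m, (x-m)*f' x := by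
                have hpw : ∀ x ∈ Set.Icc a m,
                    (fun x => -((m-x)*(c*Real.exp (k*x)))) x ≤ (fun x => (x-m)*f' x) x := by
                  intro x hx
                  have hax : x ∈ Set.Icc a b := ⟨hx.1, le_trans hx.2 hmb⟩
                  have h8 : (x-m)*(c*Real.exp (k*x)) ≤ (x-m)*f' x :=
                    mul_le_mul_of_nonpos_left
                      (le_trans (le_abs_self _) (hP x hax)) (by linarith [hx.2])
                  show -((m-x)*(c*Real.exp (k*x))) ≤ (x-m)*f' x
                  nlinarith [h8]
                have h := intervalIntegral.integral_mono_on (μ := volume) ham hQ2i.neg hw1 hpw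
                simp only [Pi.neg_apply] at h
                rwa [intervalIntegral.integral_neg] at h
              rw [← hsplit, abs_le]
              constructor
              · linarith
              · linarith
          -- compute the majorant integral
          have hQv : ∫ x in m..b, (x-m)*(c*Real.exp (k*x))
              = c*Real.exp (k*b)*((b-m)/k - 1/k^2) + c*Real.exp (k*m)*(1/k^2) :=
            Qval m b c k (ne_of_gt hk0)
          have hckb : c * Real.exp (k*b) = |f' b| := by
            rw [hcdef, mul_assoc, ← Real.exp_add]
            have he : u*b/(b-a) + k*b = 0 := by rw [hkdef]; field_simp; ring
            rw [he, Real.exp_zero, mul_one]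
          have hckm : c * Real.exp (k*m) = |f' b| * Real.exp (u/2) := by
            rw [hcdef, mul_assoc, ← Real.exp_add]
            congr 2
            rw [hkdef, hm]
            field_simp
            ring
          have hφ : Real.exp u ≤ 1 + u * Real.exp (u/2) := myphi hu.le
          rw [hS, hTrw, abs_div, abs_of_pos hba, div_le_iff₀ hba]
          refine le_trans habs ?_
          rw [hQv, hckb, hckm, hkdef, hm]
          have hbm : b - (a+b)/2 = (b-a)/2 := by ring
          rw [hbm]
          exact final_ineq (b-a) |f' b| u (Real.exp (u/2)) (Real.exp u)
            hba (abs_nonneg _) hu hφ
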